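/- Let R be a commutative ring and let I_1, ..., I_n be ideals of R satisfying I_i · I_i = I_i for every i. Then for every k with 1 ≤ k ≤ n, the product over all subsets S of {1,...,n} with |S| = k of the ideals ∑_{i∈S} I_i equals the sum over all subsets T of {1,...,n} with |T| = n-k+1 of the ideal products ∏_{j∈T} I_j; that is, ∏_{S⊆{1,...,n}, |S|=k} (∑_{i∈S} I_i) = ∑_{T⊆{1,...,n}, |T|=n-k+1} (∏_{j∈T} I_j). -/

import Mathlib

open Finset

section Aux
variable {R : Type*} [CommRing R]

/-- Product monotonicity for ideals. -/
lemma ideal_prod_le_prod {ι : Type*} (s : Finset ι) (f g : ι → Ideal R)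
    (h : ∀ i ∈ s, f i ≤ g i) : ∏ i ∈ s, f i ≤ ∏ i ∈ s, g i := by
  classical
  induction s using Finset.induction with
  | empty => simp
  | insert _ _ ha ih =>
    rw [Finset.prod_insert ha, Finset.prod_insert ha]
    exact Ideal.mul_mono (h _ (Finset.mem_insert_self _ _))
      (ih fun i hi => h i (Finset.mem_insert_of_mem hi))

/-- An idempotent ideal below every factor is below the product. -/
lemma idem_le_prod {ι : Type*} {X : Ideal R} (hX : X * X = X) (s : Finset ι)
    (hs : s.Nonempty) (f : ι → Ideal R) (h : ∀ i ∈ s, X ≤ f i) :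
    X ≤ ∏ i ∈ s, f i := by
  classical
  induction hs using Finset.Nonempty.cons_induction with
  | singleton a => simpa using h a (Finset.mem_singleton_self a)
  | cons a s ha hs ih =>
    rw [Finset.prod_cons]
    calc X = X * X := hX.symm
    _ ≤ f a * ∏ i ∈ s, f i :=
        Ideal.mul_mono (h a (Finset.mem_cons_self a s))
          (ih fun i hi => h i (Finset.mem_cons_of_mem hi))

/-- Product over a finset is at most the product over the image of a map. -/
lemma prod_comp_le_prod_image {ι κ : Type*} [DecidableEq κ] (s : Finset ι) (g : ι → κ)
    (f : κ → Ideal R) : ∏ x ∈ s, f (g x) ≤ ∏ j ∈ s.image g, f j := by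
  classical
  rw [← Finset.prod_fiberwise_of_maps_to' (fun i hi => Finset.mem_image_of_mem g hi) f]
  refine ideal_prod_le_prod _ _ _ fun j hj => ?_
  rw [Finset.prod_const]
  obtain ⟨i, hi, hgi⟩ := Finset.mem_image.mp hj
  exact Ideal.pow_le_self (Finset.card_ne_zero_of_mem (Finset.mem_filter.mpr ⟨hi, hgi⟩))

/-- Dropping factors from a product of ideals enlarges it. -/
lemma prod_subset_le {ι : Type*} [DecidableEq ι] {T A : Finset ι} (hTA : T ⊆ A)
    (f : ι → Ideal R) : ∏ j ∈ A, f j ≤ ∏ j ∈ T, f j := by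
  rw [← Finset.prod_sdiff hTA]
  exact Ideal.mul_le_right

end Aux


/-- Lemma 2.4(a) of the paper: for idempotent ideals `I₁, …, Iₙ` in a commutative ring,
`∏_{S ⊆ {1,…,n}, |S| = k} (∑_{i ∈ S} Iᵢ) = ∑_{T ⊆ {1,…,n}, |T| = n-k+1} (∏_{j ∈ T} Iⱼ)`
for all `1 ≤ k ≤ n`. -/
theorem prod_of_sums_eq_sum_of_prods
    {R : Type*} [CommRing R] (n : ℕ) (I : Fin n → Ideal R)
    (hidem : ∀ i, I i * I i = I i) (k : ℕ) (hk1 : 1 ≤ k) (hkn : k ≤ n) :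
    ∏ S ∈ Finset.univ.powersetCard k, (∑ i ∈ S, I i)
      = ∑ T ∈ Finset.univ.powersetCard (n - k + 1), (∏ j ∈ T, I j) := by
  classical
  apply le_antisymm
  · -- product of sums ≤ sum of products
    rw [Finset.prod_sum, Ideal.sum_eq_sup, Ideal.sum_eq_sup]
    refine Finset.sup_le fun p hp => ?_
    set A : Finset (Fin n) :=
      ((Finset.univ.powersetCard k).attach).image (fun x => p x.1 x.2) with hA
    have hAcard : n - k + 1 ≤ A.card := by
      by_contra hlt
      push_neg at hlt
      have hAle : A.card ≤ n - k := by omega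
      have hcompl : k ≤ Aᶜ.card := by
        rw [Finset.card_compl, Fintype.card_fin]
        omega
      obtain ⟨S, hSsub, hScard⟩ := Finset.exists_subset_card_eq hcompl
      have hS𝒮 : S ∈ (Finset.univ : Finset (Fin n)).powersetCard k :=
        Finset.mem_powersetCard_univ.mpr hScard
      have hj : p S hS𝒮 ∈ S := Finset.mem_pi.mp hp S hS𝒮
      have hjA : p S hS𝒮 ∈ A :=
        Finset.mem_image.mpr ⟨⟨S, hS𝒮⟩, Finset.mem_attach _ _, rfl⟩
      have := hSsub hj
      rw [Finset.mem_compl] at this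
      exact this hjA
    obtain ⟨T, hTA, hTcard⟩ := Finset.exists_subset_card_eq hAcard
    calc ∏ x ∈ ((Finset.univ.powersetCard k)).attach, I (p x.1 x.2)
        ≤ ∏ j ∈ A, I j := prod_comp_le_prod_image _ _ _
      _ ≤ ∏ j ∈ T, I j := prod_subset_le hTA I
      _ ≤ _ := Finset.le_sup (f := fun T => ∏ j ∈ T, I j) (Finset.mem_powersetCard_univ.mpr hTcard)
  · -- sum of products ≤ product of sums
    rw [Ideal.sum_eq_sup]
    refine Finset.sup_le fun T hT => ?_
    have hTcard := Finset.mem_powersetCard_univ.mp hT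
    have hXidem : (∏ j ∈ T, I j) * (∏ j ∈ T, I j) = ∏ j ∈ T, I j := by
      rw [← Finset.prod_mul_distrib]
      exact Finset.prod_congr rfl fun j _ => hidem j
    refine idem_le_prod hXidem _
      (Finset.powersetCard_nonempty.mpr (by simpa using hkn)) _ fun S hS => ?_
    have hScard := Finset.mem_powersetCard_univ.mp hS
    have hinter : (S ∩ T).Nonempty := by
      rw [← Finset.card_pos]
      have h1 := Finset.card_union_add_card_inter S T
      have h2 : (S ∪ T).card ≤ n := by
        simpa using Finset.card_le_univ (S ∪ T)
      omega
    obtain ⟨i, hi⟩ := hinter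
    rw [Finset.mem_inter] at hi
    calc ∏ j ∈ T, I j ≤ T.inf I := Ideal.prod_le_inf
      _ ≤ I i := Finset.inf_le hi.2
      _ ≤ ∑ i ∈ S, I i := by
          rw [Ideal.sum_eq_sup]; exact Finset.le_sup hi.1
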